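/- For every Mathias condition [a,A] and every canonical numbering D, there is an infinite computable set B ⊆ A such that for all i ≥ |a|, D(i) ⊆ a ∪ B implies |D(i)| ≤ i. -/

import Mathlib

/-- The `e`-th computably enumerable set. -/
def WSet (e : ℕ) : Set ℕ := {n | ((Denumerable.ofNat Nat.Partrec.Code e).eval n).Dom}

/-- A canonical numbering: a computable surjection onto the finite subsets of `ℕ`. -/
def CanonicalNumbering (D : ℕ → Finset ℕ) : Prop := Computable D ∧ Function.Surjective D

/-- `R` is canonically immune with modulus of immunity `h`. -/
def CanonImmuneMod (R : Set ℕ) (h : ℕ → ℕ) : Prop :=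
  R.Infinite ∧ ∀ D : ℕ → Finset ℕ, CanonicalNumbering D →
    ∀ᶠ i in Filter.atTop, ↑(D i) ⊆ R → (D i).card ≤ h i

/-- `R` is canonically immune. -/
def CanonicallyImmune (R : Set ℕ) : Prop :=
  ∃ h : ℕ → ℕ, Computable h ∧ CanonImmuneMod R h

/-- `R` is Δ⁰₂ (limit computable). -/
def Delta02 (R : Set ℕ) : Prop :=
  ∃ f : ℕ → ℕ → Bool, Computable₂ f ∧
    ∀ n, ∀ᶠ s in Filter.atTop, (f s n = true ↔ n ∈ R)

/-- Partial functions recursive in an oracle `O : ℕ → ℕ`. -/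
inductive OracleRecursiveIn (O : ℕ → ℕ) : (ℕ →. ℕ) → Prop
  | zero : OracleRecursiveIn O fun _ => 0
  | succ : OracleRecursiveIn O fun n => Part.some (n + 1)
  | left : OracleRecursiveIn O fun n => Part.some (Nat.unpair n).1
  | right : OracleRecursiveIn O fun n => Part.some (Nat.unpair n).2
  | oracle : OracleRecursiveIn O fun n => Part.some (O n)
  | pair {f g} : OracleRecursiveIn O f → OracleRecursiveIn O g →
      OracleRecursiveIn O fun n => Nat.pair <$> f n <*> g n
  | comp {f g} : OracleRecursiveIn O f → OracleRecursiveIn O g →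
      OracleRecursiveIn O fun n => g n >>= f
  | prec {f g} : OracleRecursiveIn O f → OracleRecursiveIn O g →
      OracleRecursiveIn O (Nat.unpaired fun a n =>
        n.rec (f a) fun y IH => do let i ← IH; g (Nat.pair a (Nat.pair y i)))
  | rfind {f} : OracleRecursiveIn O f →
      OracleRecursiveIn O fun a => Nat.rfind fun n => (fun m => m = 0) <$> f (Nat.pair a n)

open Classical in
/-- Characteristic function of a set of naturals. -/
noncomputable def chi (A : Set ℕ) : ℕ → ℕ := fun n => if n ∈ A then 1 else 0

/-- `A` is Turing reducible to the oracle `O`. -/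
def TuringReducibleTo (A : Set ℕ) (O : ℕ → ℕ) : Prop :=
  OracleRecursiveIn O fun n => Part.some (chi A n)

/-- `A` is Turing reducible to the set `B`. -/
def TuringReducibleSet (A B : Set ℕ) : Prop := TuringReducibleTo A (chi B)

/-- The oracle given by a real `G ∈ 2^ω`. -/
def oracleOf (G : ℕ → Bool) : ℕ → ℕ := fun n => cond (G n) 1 0

/-- `S` is computably enumerable relative to the real `G`. -/
def CEIn (G : ℕ → Bool) (S : Set ℕ) : Prop :=
  ∃ f : ℕ →. ℕ, OracleRecursiveIn (oracleOf G) f ∧ S = {n | (f n).Dom}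

/-- The length-`n` initial segment of a real. -/
def initSeg (G : ℕ → Bool) (n : ℕ) : List Bool := List.ofFn fun i : Fin n => G i

/-- A Σ⁰₂ set of binary strings. -/
def Sigma02Strings (X : Set (List Bool)) : Prop :=
  ∃ p : List Bool → ℕ → ℕ → Bool,
    (Computable fun x : List Bool × ℕ × ℕ => p x.1 x.2.1 x.2.2) ∧
    X = {σ | ∃ m, ∀ k, p σ m k = true}

/-- A (Cohen) 2-generic real. -/
def TwoGeneric (G : ℕ → Bool) : Prop :=
  ∀ X : Set (List Bool), Sigma02Strings X →
    (∃ n, initSeg G n ∈ X) ∨ (∃ n, ∀ τ, initSeg G n <+: τ → τ ∉ X)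

/-- A computably enumerable set of binary strings. -/
def CEStrings (X : Set (List Bool)) : Prop :=
  ∃ p : List Bool → ℕ → Bool, Computable₂ p ∧ X = {σ | ∃ s, p σ s = true}

/-- A dense set of binary strings. -/
def DenseStrings (X : Set (List Bool)) : Prop := ∀ σ, ∃ τ, σ <+: τ ∧ τ ∈ X

/-- A weakly 1-generic real. -/
def Weakly1Generic (G : ℕ → Bool) : Prop :=
  ∀ X : Set (List Bool), CEStrings X → DenseStrings X → ∃ n, initSeg G n ∈ X

/-- A hyperimmune set: infinite and its increasing enumeration (principal function)
is not dominated by any computable function. -/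
def Hyperimmune (R : Set ℕ) : Prop :=
  R.Infinite ∧ ∀ f : ℕ → ℕ, Computable f →
    ∃ᶠ n in Filter.atTop, f n < Nat.nth (· ∈ R) n

/-- A (computable) Mathias condition `[a, A]`. -/
structure MathiasCond where
  a : Finset ℕ
  A : Set ℕ
  infinite : A.Infinite
  comp : ComputablePred (· ∈ A)
  lt : ∀ x ∈ a, ∀ y ∈ A, x < y

/-- `c'` extends `c` as a Mathias condition. -/
def MathiasCond.Extends (c' c : MathiasCond) : Prop :=
  c.a ⊆ c'.a ∧ (↑c'.a \ ↑c.a : Set ℕ) ⊆ c.A ∧ c'.A ⊆ c.A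

/-- A dense family of Mathias conditions. -/
def MathiasDense (𝒳 : Set MathiasCond) : Prop := ∀ c, ∃ c' ∈ 𝒳, c'.Extends c

/-- `R ∈ [a, A]`. -/
def MathiasCond.Mem (c : MathiasCond) (R : Set ℕ) : Prop :=
  ↑c.a ⊆ R ∧ R ⊆ ↑c.a ∪ c.A

/-- `R` meets the family `𝒳` of Mathias conditions. -/
def Meets (R : Set ℕ) (𝒳 : Set MathiasCond) : Prop := ∃ c ∈ 𝒳, c.Mem R

/-- The arithmetical sets of naturals: closure of the computable sets under
complementation and projection. -/
inductive Arithmetical : Set ℕ → Prop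
  | of_computable {S : Set ℕ} : ComputablePred (· ∈ S) → Arithmetical S
  | compl {S : Set ℕ} : Arithmetical S → Arithmetical {n | n ∉ S}
  | proj {S : Set ℕ} : Arithmetical S → Arithmetical {n | ∃ m, Nat.pair n m ∈ S}

open Classical in
/-- `n` codes the Mathias condition `c`: its first component is the canonical code of the
finite set and its second component is an index for the characteristic function of `A`. -/
noncomputable def CondCode (n : ℕ) (c : MathiasCond) : Prop :=
  n.unpair.1 = Encodable.encode c.a ∧
  ∀ x, ((Denumerable.ofNat Nat.Partrec.Code n.unpair.2)).eval x = Part.some (if x ∈ c.A then 1 else 0)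

/-- The set of codes of members of `𝒳`. -/
def CodesOf (𝒳 : Set MathiasCond) : Set ℕ := {n | ∃ c ∈ 𝒳, CondCode n c}

/-- A Mathias generic real: one meeting every arithmetically definable dense family
of Mathias conditions. -/
def MathiasGeneric (R : Set ℕ) : Prop :=
  ∀ 𝒳 : Set MathiasCond, Arithmetical (CodesOf 𝒳) → MathiasDense 𝒳 → Meets R 𝒳

/-- A Σ⁰₃ set of naturals. -/
def Sigma03Set (S : Set ℕ) : Prop :=
  ∃ p : ℕ → ℕ → ℕ → ℕ → Bool,
    (Computable fun x : ℕ × ℕ × ℕ × ℕ => p x.1 x.2.1 x.2.2.1 x.2.2.2) ∧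
    S = {n | ∃ a, ∀ b, ∃ c, p n a b c = true}

/-- A Mathias 3-generic real. -/
def Mathias3Generic (R : Set ℕ) : Prop :=
  ∀ 𝒳 : Set MathiasCond, Sigma03Set (CodesOf 𝒳) → MathiasDense 𝒳 → Meets R 𝒳

/-- An effectively immune set. -/
def EffectivelyImmune (Q : Set ℕ) : Prop :=
  Q.Infinite ∧ ∃ h : ℕ → ℕ, Computable h ∧
    ∀ e, WSet e ⊆ Q → (WSet e).Finite ∧ (WSet e).ncard ≤ h e

/-- The basic cylinder of 2^ω determined by the finite string `σ`. -/
def Cyl (σ : List Bool) : Set (ℕ → Bool) := {G | ∀ i : Fin σ.length, G i = σ.get i}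

/-- The open subset of 2^ω generated by a set of strings. -/
def OpenFrom (P : Set (List Bool)) : Set (ℕ → Bool) := ⋃ σ ∈ P, Cyl σ

/-- A uniformly c.e. sequence of sets of strings. -/
def UniformlyCE (P : ℕ → Set (List Bool)) : Prop :=
  ∃ f : ℕ → List Bool → ℕ → Bool,
    (Computable fun x : ℕ × List Bool × ℕ => f x.1 x.2.1 x.2.2) ∧
    ∀ n σ, σ ∈ P n ↔ ∃ s, f n σ s = true

/-- `μ` is the uniform (fair-coin) product measure on 2^ω: every basic cylinder
determined by a string of length `l` has measure `2⁻ˡ`. -/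
def IsFairCoin (μ : MeasureTheory.Measure (ℕ → Bool)) : Prop :=
  ∀ σ : List Bool, μ (Cyl σ) = (2 ^ σ.length : ENNReal)⁻¹

/-- A Schnorr test with respect to the measure `μ`: uniformly c.e. open sets with
uniformly computable measures bounded by `2^{-n}`. -/
def SchnorrTest (μ : MeasureTheory.Measure (ℕ → Bool)) (U : ℕ → Set (ℕ → Bool)) : Prop :=
  (∃ P : ℕ → Set (List Bool), UniformlyCE P ∧ ∀ n, U n = OpenFrom (P n)) ∧
  (∃ q : ℕ → ℕ → ℚ, Computable₂ q ∧
    ∀ n k, |(q n k : ℝ) - (μ (U n)).toReal| ≤ (2 : ℝ)⁻¹ ^ k) ∧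
  ∀ n, μ (U n) ≤ (2 ^ n : ENNReal)⁻¹

/-- A Schnorr random real (with respect to the fair-coin measure `μ`). -/
def SchnorrRandom (μ : MeasureTheory.Measure (ℕ → Bool)) (G : ℕ → Bool) : Prop :=
  ∀ U : ℕ → Set (ℕ → Bool), SchnorrTest μ U → G ∉ ⋂ n, U n

open Classical in
/-- The characteristic sequence of a set of naturals, as a point of 2^ω. -/
noncomputable def chiB (R : Set ℕ) : ℕ → Bool := fun n => decide (n ∈ R)


open Encodable Denumerable

lemma add_le_pair (a b : ℕ) : a + b ≤ Nat.pair a b := by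
  unfold Nat.pair
  split
  · rename_i h
    have hb : 1 ≤ b := Nat.lt_of_le_of_lt (Nat.zero_le a) h
    nlinarith
  · nlinarith

lemma mem_raise'_le : ∀ (L : List ℕ) (m : ℕ), ∀ x ∈ Denumerable.raise' L m,
    x ≤ m + Encodable.encode L
  | [], _, x, hx => by simp [Denumerable.raise'] at hx
  | a :: L, m, x, hx => by
    rw [Denumerable.raise'] at hx
    rcases List.mem_cons.1 hx with h | h
    · subst h
      have : Encodable.encode a ≤ Encodable.encode (a :: L) := by
        rw [Encodable.encode_list_cons]
        exact le_trans (Nat.left_le_pair _ _) (Nat.le_succ_of_le le_rfl)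
      simp only [Encodable.encode_nat] at this
      omega
    · have := mem_raise'_le L (a + m + 1) x h
      have h2 : a + m + 1 + Encodable.encode L ≤ m + Encodable.encode (a :: L) := by
        rw [Encodable.encode_list_cons]
        have := add_le_pair (Encodable.encode a) (Encodable.encode L)
        simp only [Encodable.encode_nat] at this ⊢
        omega
      omega

lemma mem_ofNat_finset_le {n x : ℕ} (hx : x ∈ Denumerable.ofNat (Finset ℕ) n) : x ≤ n := by
  have h : Denumerable.ofNat (Finset ℕ) n
      = Finset.map (Denumerable.eqv ℕ).symm.toEmbedding
          (Denumerable.raise'Finset (Denumerable.ofNat (List ℕ) n) 0) :=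
    Denumerable.ofNat_of_decode rfl
  rw [h, Finset.mem_map] at hx
  obtain ⟨y, hy, hyx⟩ := hx
  have hyx' : y = x := by
    simpa [Denumerable.eqv, Denumerable.ofNat_nat] using hyx
  subst hyx'
  have hy' : y ∈ Denumerable.raise' (Denumerable.ofNat (List ℕ) n) 0 := hy
  have := mem_raise'_le _ 0 y hy'
  simpa [Denumerable.encode_ofNat] using this

/-- The encoding of finsets used by the `Primcodable (Finset ℕ)` instance. -/
noncomputable def encF : Finset ℕ → ℕ :=
  fun s => @Encodable.encode _ (Denumerable.toEncodable : Encodable (Finset ℕ)) s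

lemma encF_computable : Computable encF := Computable.encode

lemma mem_finset_le_encF (s : Finset ℕ) {x : ℕ} (hx : x ∈ s) : x ≤ encF s :=
  mem_ofNat_finset_le (n := encF s) (by unfold encF; rwa [Denumerable.ofNat_encode])


lemma exists_computable_enum (A : Set ℕ) (hA : A.Infinite) (hc : ComputablePred (· ∈ A))
    (g : ℕ → ℕ) (hg : Computable g) :
    ∃ b : ℕ → ℕ, Computable b ∧ StrictMono b ∧ (∀ n, b n ∈ A) ∧ ∀ n, g n < b n := by
  obtain ⟨f, hf, hpf⟩ := ComputablePred.computable_iff.1 hc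
  have hfA : ∀ n, f n = true ↔ n ∈ A := fun n => (iff_of_eq (congrFun hpf n)).symm
  have hex : ∀ m : ℕ, ∃ n, (decide (m < n) && f n) = true := by
    intro m
    obtain ⟨n, hnA, hmn⟩ := hA.exists_gt m
    exact ⟨n, by simp [hmn, (hfA n).2 hnA]⟩
  have hnext_spec : ∀ m, m < Nat.find (hex m) ∧ Nat.find (hex m) ∈ A := by
    intro m
    have h := Nat.find_spec (hex m)
    rw [Bool.and_eq_true] at h
    exact ⟨of_decide_eq_true h.1, (hfA _).1 h.2⟩
  -- computability of the "next element" function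
  have h1 : Computable fun p : ℕ × ℕ => decide (p.1 < p.2) :=
    (Primrec.nat_lt.comp Primrec.fst Primrec.snd).decide.to_comp
  have h2 : Computable fun p : ℕ × ℕ => f p.2 := hf.comp Computable.snd
  have hP : Computable₂ fun (m n : ℕ) => decide (m < n) && f n := by
    have := Computable.cond h1 h2 (Computable.const false)
    exact this.of_eq fun p => by cases h : decide (p.1 < p.2) <;> simp [h]
  have hnext : Computable fun m => Nat.find (hex m) := by
    have hrf : Partrec fun m : ℕ =>
        Nat.rfind fun n => (Part.some (decide (m < n) && f n) : Part Bool) :=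
      Partrec.rfind hP.partrec₂
    apply hrf.of_eq
    intro m
    apply Part.eq_some_iff.2
    apply Nat.mem_rfind.2
    constructor
    · exact Part.mem_some_iff.2 (Nat.find_spec (hex m)).symm
    · intro m' hm'
      exact Part.mem_some_iff.2 (Bool.eq_false_iff.2 (Nat.find_min (hex m) hm')).symm
  -- the enumeration
  refine ⟨fun n => Nat.rec (Nat.find (hex (g 0)))
      (fun y IH => Nat.find (hex (max IH (g (y + 1))))) n, ?_, ?_, ?_, ?_⟩
  · have hh0 : Computable fun q : ℕ × (ℕ × ℕ) => Nat.find (hex (max q.2.2 (g (q.2.1 + 1)))) :=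
      hnext.comp ((Primrec₂.to_comp Primrec.nat_max).comp
        (Computable.snd.comp Computable.snd)
        (hg.comp (Computable.succ.comp (Computable.fst.comp Computable.snd))))
    have hh : Computable₂ fun (_ : ℕ) (p : ℕ × ℕ) => Nat.find (hex (max p.2 (g (p.1 + 1)))) :=
      hh0.to₂
    exact Computable.nat_rec Computable.id (Computable.const (Nat.find (hex (g 0)))) hh
  · apply strictMono_nat_of_lt_succ
    intro n
    exact lt_of_le_of_lt (le_max_left _ _) (hnext_spec _).1
  · intro n
    cases n with
    | zero => exact (hnext_spec _).2
    | succ n => exact (hnext_spec _).2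
  · intro n
    cases n with
    | zero => exact (hnext_spec _).1
    | succ n => exact lt_of_le_of_lt (le_max_right _ _) (hnext_spec _).1


lemma range_mem_computable {b : ℕ → ℕ} (hb : Computable b) (hsm : StrictMono b) :
    ComputablePred (· ∈ Set.range b) := by
  have hle : ∀ n, n ≤ b n := fun n => by
    induction n with
    | zero => exact Nat.zero_le _
    | succ n ih => exact Nat.succ_le_of_lt (lt_of_le_of_lt ih (hsm (Nat.lt_succ_self n)))
  have hg0 : Computable fun p : ℕ × ℕ => decide (b 0 = p.1) :=
    (Primrec₂.to_comp Primrec.eq.decide).comp (hb.comp (Computable.const 0)) Computable.fst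
  have heq : Computable fun r : (ℕ × ℕ) × ℕ × Bool => decide (b (r.2.1 + 1) = r.1.1) :=
    (Primrec₂.to_comp Primrec.eq.decide).comp
      (hb.comp (Computable.succ.comp (Computable.fst.comp Computable.snd)))
      (Computable.fst.comp Computable.fst)
  have hstep0 : Computable fun r : (ℕ × ℕ) × ℕ × Bool =>
      (r.2.2 || decide (b (r.2.1 + 1) = r.1.1)) := by
    have := Computable.cond (Computable.snd.comp Computable.snd) (Computable.const true) heq
    exact this.of_eq fun r => by cases h : r.2.2 <;> simp [h]
  have hstep : Computable₂ fun (p : ℕ × ℕ) (q : ℕ × Bool) =>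
      (q.2 || decide (b (q.1 + 1) = p.1)) := hstep0.to₂
  have haux : Computable fun p : ℕ × ℕ =>
      Nat.rec (motive := fun _ => Bool) (decide (b 0 = p.1))
        (fun y IH => IH || decide (b (y + 1) = p.1)) p.2 :=
    Computable.nat_rec Computable.snd hg0 hstep
  have hF : Computable fun x : ℕ =>
      Nat.rec (motive := fun _ => Bool) (decide (b 0 = x))
        (fun y IH => IH || decide (b (y + 1) = x)) x :=
    haux.comp (Computable.id.pair Computable.id)
  have spec : ∀ x m, (Nat.rec (motive := fun _ => Bool) (decide (b 0 = x))
      (fun y IH => IH || decide (b (y + 1) = x)) m = true) ↔ ∃ n ≤ m, b n = x := by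
    intro x m
    induction m with
    | zero => simp
    | succ m ih =>
      simp only [Bool.or_eq_true, decide_eq_true_eq, ih]
      constructor
      · rintro (⟨n, hn, hbn⟩ | h)
        · exact ⟨n, Nat.le_succ_of_le hn, hbn⟩
        · exact ⟨m + 1, le_rfl, h⟩
      · rintro ⟨n, hn, hbn⟩
        rcases Nat.lt_succ_iff_lt_or_eq.1 (Nat.lt_succ_of_le hn) with h | h
        · exact Or.inl ⟨n, Nat.lt_succ_iff.1 h, hbn⟩
        · subst h; exact Or.inr hbn
  apply ComputablePred.computable_iff.2
  refine ⟨_, hF, funext fun x => propext ?_⟩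
  constructor
  · rintro ⟨n, hbn⟩
    exact (spec x x).2 ⟨n, le_trans (hle n) (le_of_eq hbn), hbn⟩
  · intro h
    obtain ⟨n, _, hbn⟩ := (spec x x).1 h
    exact ⟨n, hbn⟩


/-- For every Mathias condition `[a,A]` and canonical numbering `D` there is an infinite
computable `B ⊆ A` with: for all `i ≥ |a|`, `D(i) ⊆ a ∪ B` implies `|D(i)| ≤ i`. -/
theorem exists_good_reservoir :
    ∀ (c : MathiasCond) (D : ℕ → Finset ℕ), CanonicalNumbering D →
      ∃ B : Set ℕ, B ⊆ c.A ∧ B.Infinite ∧ ComputablePred (· ∈ B) ∧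
        ∀ i, c.a.card ≤ i → ↑(D i) ⊆ (↑c.a ∪ B : Set ℕ) → (D i).card ≤ i := by
  classical
  intro c D hD
  obtain ⟨hDc, -⟩ := hD
  set k := c.a.card with hk
  set E : ℕ → ℕ := fun i => encF (D i) with hE_def
  have hE : Computable E := encF_computable.comp hDc
  -- a computable bound for the encodings
  set gM : ℕ → ℕ := fun n =>
    Nat.rec (motive := fun _ => ℕ) (E k) (fun y IH => max IH (E (y + 1 + k))) n with hgM_def
  have haddk : Computable fun m : ℕ => m + k :=
    (Primrec₂.to_comp Primrec.nat_add).comp Computable.id (Computable.const k)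
  have hh0 : Computable fun q : ℕ × ℕ × ℕ => max q.2.2 (E (q.2.1 + 1 + k)) :=
    (Primrec₂.to_comp Primrec.nat_max).comp (Computable.snd.comp Computable.snd)
      (hE.comp (haddk.comp (Computable.succ.comp (Computable.fst.comp Computable.snd))))
  have hh : Computable₂ fun (_ : ℕ) (p : ℕ × ℕ) => max p.2 (E (p.1 + 1 + k)) := hh0.to₂
  have hgM : Computable gM :=
    Computable.nat_rec Computable.id (Computable.const (E k)) hh
  have hgM_bound : ∀ n i, k ≤ i → i ≤ n + k → E i ≤ gM n := by
    intro n
    induction n with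
    | zero =>
      intro i h1 h2
      have hik : i = k := le_antisymm (by simpa using h2) h1
      subst hik
      exact le_rfl
    | succ n ih =>
      intro i h1 h2
      have hstep : gM (n + 1) = max (gM n) (E (n + 1 + k)) := rfl
      rw [hstep]
      by_cases h : i ≤ n + k
      · exact le_trans (ih i h1 h) (le_max_left _ _)
      · have : i = n + 1 + k := by omega
        subst this
        exact le_max_right _ _
  -- the sparse reservoir
  obtain ⟨b, hb, hsm, hbA, hgb⟩ := exists_computable_enum c.A c.infinite c.comp gM hgM
  refine ⟨Set.range b, ?_, ?_, range_mem_computable hb hsm, ?_⟩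
  · rintro x ⟨n, rfl⟩
    exact hbA n
  · exact Set.infinite_range_of_injective hsm.injective
  · intro i hki hsub
    by_contra hlt
    push_neg at hlt
    -- elements of `D i` outside `a` lie in the range of `b`
    set T := (D i).filter (· ∈ Set.range b) with hT
    have hsub' : (D i) \ c.a ⊆ T := by
      intro x hx
      rw [Finset.mem_sdiff] at hx
      rw [hT, Finset.mem_filter]
      refine ⟨hx.1, ?_⟩
      rcases hsub hx.1 with h | h
      · exact absurd h hx.2
      · exact h
    have hcardT : (D i).card - k ≤ T.card := by
      have h1 : (D i).card ≤ ((D i) \ c.a).card + k := Finset.card_le_card_sdiff_add_card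
      have h2 : ((D i) \ c.a).card ≤ T.card := Finset.card_le_card hsub'
      omega
    set idx := T.preimage b (Set.injOn_of_injective hsm.injective) with hidx
    have h_img : idx.image b = T := by
      rw [hidx, Finset.image_preimage]
      apply Finset.filter_true_of_mem
      intro x hx
      rw [hT, Finset.mem_filter] at hx
      exact hx.2
    have hcard_idx : T.card ≤ idx.card := by
      rw [← h_img]
      exact Finset.card_image_le
    have hbig : ∃ n ∈ idx, i ≤ n + k := by
      by_contra hno
      push_neg at hno
      have hss : idx ⊆ Finset.range (i - k) := by
        intro n hn
        rw [Finset.mem_range]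
        have := hno n hn
        omega
      have := Finset.card_le_card hss
      rw [Finset.card_range] at this
      omega
    obtain ⟨n, hn, hin⟩ := hbig
    have hbnT : b n ∈ T := Finset.mem_preimage.1 hn
    have hbnD : b n ∈ D i := by
      rw [hT, Finset.mem_filter] at hbnT
      exact hbnT.1
    have h1 : b n ≤ E i := mem_finset_le_encF (D i) hbnD
    have h2 : E i ≤ gM n := hgM_bound n i hki hin
    have h3 : gM n < b n := hgb n
    omega
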